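/- Let ∂_1', ..., ∂_n' be pairwise commuting, locally nilpotent K-derivations of P_n = K[x_1,...,x_n] with ∩_{i=1}^n ker_{P_n}(∂_i') = K. Then there exist polynomials x_1', ..., x_n' ∈ P_n with ∂_i'(x_j') = δ_{ij} (Kronecker delta), the algebra map σ: P_n → P_n defined by x_i ↦ x_i' is a K-algebra automorphism, and ∂_i' = σ ∂_i σ^{-1} for all i. -/

import Mathlib

open MvPolynomial

set_option linter.unusedSectionVars false

namespace CLND

variable {n : ℕ} {K : Type*} [Field K] [CharZero K]

abbrev MP (n : ℕ) (K : Type*) [CommSemiring K] := MvPolynomial (Fin n) K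

/-- general list lemma: product of pointwise products of commuting families -/
lemma list_prod_map_mul {M ι : Type*} [Monoid M] (l : List ι) (f g : ι → M)
    (h : ∀ i j, Commute (f i) (g j)) :
    (l.map fun i => f i * g i).prod = (l.map f).prod * (l.map g).prod := by
  induction l with
  | nil => simp
  | cons a l ih =>
    simp only [List.map_cons, List.prod_cons, ih]
    have hc : Commute (g a) ((l.map f).prod) := by
      apply Commute.list_prod_right
      intro x hx
      simp only [List.mem_map] at hx
      obtain ⟨j, _, rfl⟩ := hx
      exact (h j a).symm
    rw [mul_assoc, ← mul_assoc (g a), hc.eq]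
    group

lemma list_prod_map_single {M ι : Type*} [Monoid M] [DecidableEq ι] (l : List ι) (f : ι → M)
    (i : ι) (hf : ∀ j, j ≠ i → f j = 1) (hl : i ∈ l) (hnd : l.Nodup) :
    (l.map f).prod = f i := by
  induction l with
  | nil => simp at hl
  | cons a l ih =>
    simp only [List.map_cons, List.prod_cons]
    rcases List.mem_cons.mp hl with rfl | hmem
    · have : ∀ j ∈ l, f j = 1 := fun j hj => hf j (fun e => ((List.nodup_cons.mp hnd).1 (e ▸ hj)))
      rw [List.prod_eq_one]
      · simp
      · intro x hx
        simp only [List.mem_map] at hx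
        obtain ⟨j, hj, rfl⟩ := hx
        exact this j hj
    · have hne : a ≠ i := fun e => (List.nodup_cons.mp hnd).1 (e ▸ hmem)
      rw [hf a hne, one_mul, ih hmem (List.nodup_cons.mp hnd).2]

variable (d : Fin n → Derivation K (MP n K) (MP n K))

/-- the multi-index iterated derivation -/
noncomputable def Dp (α : Fin n → ℕ) : Module.End K (MP n K) :=
  ((List.finRange n).map fun i => ((d i).toLinearMap ^ (α i))).prod

variable (hcomm : ∀ i j : Fin n, ⁅d i, d j⁆ = 0)

include hcomm in
lemma d_comm (i j : Fin n) (p : MP n K) : d i (d j p) = d j (d i p) := by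
  have h2 : ⁅d i, d j⁆ p = 0 := by rw [hcomm i j]; simp
  rw [Derivation.commutator_apply] at h2
  exact sub_eq_zero.mp h2

include hcomm in
lemma commute_pow (i j : Fin n) (a b : ℕ) :
    Commute ((d i).toLinearMap ^ a) ((d j).toLinearMap ^ b) := by
  exact Commute.pow_pow (LinearMap.ext fun p => d_comm d hcomm i j p) a b

lemma Dp_zero : Dp d 0 = 1 := by
  unfold Dp
  rw [List.prod_eq_one]
  intro x hx
  simp only [List.mem_map] at hx
  obtain ⟨j, _, rfl⟩ := hx
  simp

include hcomm in
lemma Dp_add (α β : Fin n → ℕ) : Dp d (α + β) = Dp d α * Dp d β := by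
  unfold Dp
  rw [← list_prod_map_mul]
  · congr 1
    apply List.map_congr_left
    intro i _
    simp [pow_add]
  · intro i j
    exact commute_pow d hcomm i j _ _

lemma Dp_single (i : Fin n) (k : ℕ) : Dp d (Pi.single i k) = (d i).toLinearMap ^ k := by
  unfold Dp
  rw [list_prod_map_single (i := i)]
  · simp
  · intro j hj
    simp [Pi.single_apply, hj]
  · exact List.mem_finRange i
  · exact List.nodup_finRange n

include hcomm in
lemma Dp_apply_pow (i : Fin n) (k : ℕ) (p : MP n K) :
    Dp d (Pi.single i k) p = (⇑(d i))^[k] p := by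
  rw [Dp_single d, Module.End.pow_apply]
  rfl

include hcomm in
lemma Dp_succ_left (α : Fin n → ℕ) (i : Fin n) (p : MP n K) :
    Dp d (α + Pi.single i 1) p = d i (Dp d α p) := by
  have : α + Pi.single i 1 = Pi.single i 1 + α := by rw [add_comm]
  rw [this, Dp_add d hcomm]
  simp [Module.End.mul_apply, Dp_apply_pow d hcomm]

include hcomm in
lemma Dp_succ_right (α : Fin n → ℕ) (i : Fin n) (p : MP n K) :
    Dp d (α + Pi.single i 1) p = Dp d α (d i p) := by
  rw [Dp_add d hcomm]
  simp [Module.End.mul_apply, Dp_apply_pow d hcomm]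

include hcomm in
lemma Dp_eq_zero_of_iterate (α : Fin n → ℕ) (i : Fin n) (p : MP n K)
    (h : (⇑(d i))^[α i] p = 0) : Dp d α p = 0 := by
  have hα : α = (α - Pi.single i (α i)) + Pi.single i (α i) := by
    ext j
    by_cases hj : j = i <;> simp [hj, Pi.single_apply]
  rw [hα, Dp_add d hcomm, Module.End.mul_apply, Dp_apply_pow d hcomm, h, map_zero]


section Filtration

variable (hln : ∀ (i : Fin n) (p : MP n K), ∃ m : ℕ, (⇑(d i))^[m] p = 0)
variable (hker : ∀ p : MP n K, (∀ i : Fin n, d i p = 0) ↔ ∃ c : K, p = C c)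

/-- total degree of a multi-index -/
def degS (α : Fin n → ℕ) : ℕ := ∑ i, α i

lemma degS_zero : degS (0 : Fin n → ℕ) = 0 := by simp [degS]

lemma degS_single (i : Fin n) (k : ℕ) : degS (Pi.single i k) = k := by
  simp [degS, Pi.single_apply]

lemma degS_add (α β : Fin n → ℕ) : degS (α + β) = degS α + degS β := by
  simp [degS, Finset.sum_add_distrib]

lemma exists_pos_of_degS (α : Fin n → ℕ) (h : 0 < degS α) : ∃ i, 0 < α i := by
  by_contra hc
  push_neg at hc
  have : degS α = 0 := Finset.sum_eq_zero fun i _ => Nat.le_zero.mp (hc i)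
  omega

lemma sub_single_add (α : Fin n → ℕ) (i : Fin n) (h : 0 < α i) :
    (α - Pi.single i 1) + Pi.single i 1 = α ∧ degS (α - Pi.single i 1) + 1 = degS α := by
  constructor
  · ext j
    by_cases hj : j = i <;> simp [hj, Pi.single_apply] <;> omega
  · have : degS ((α - Pi.single i 1) + Pi.single i 1) = degS α := by
      congr 1
      ext j
      by_cases hj : j = i <;> simp [hj, Pi.single_apply] <;> omega
    rw [degS_add, degS_single] at this
    exact this

/-- The filtration: elements killed by all words of length `M+1`. -/
def Fm (M : ℕ) : Submodule K (MP n K) where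
  carrier := {p | ∀ α : Fin n → ℕ, degS α = M + 1 → Dp d α p = 0}
  add_mem' := fun ha hb α h => by rw [map_add, ha α h, hb α h, add_zero]
  zero_mem' := fun α _ => map_zero _
  smul_mem' := fun c p hp α h => by rw [map_smul, hp α h, smul_zero]

lemma mem_Fm_iff (M : ℕ) (p : MP n K) :
    p ∈ Fm d M ↔ ∀ α : Fin n → ℕ, degS α = M + 1 → Dp d α p = 0 := Iff.rfl

include hcomm in
lemma Fm_big (M : ℕ) (p : MP n K) (hp : p ∈ Fm d M) :
    ∀ α : Fin n → ℕ, M < degS α → Dp d α p = 0 := by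
  have key : ∀ (k : ℕ) (α : Fin n → ℕ), degS α = M + 1 + k → Dp d α p = 0 := by
    intro k
    induction k with
    | zero => exact fun α h => hp α (by omega)
    | succ k ih =>
      intro α h
      obtain ⟨i, hi⟩ := exists_pos_of_degS α (by omega)
      obtain ⟨h1, h2⟩ := sub_single_add α i hi
      have hβ : degS (α - Pi.single i 1) = M + 1 + k := by omega
      calc Dp d α p = Dp d ((α - Pi.single i 1) + Pi.single i 1) p := by rw [h1]
        _ = d i (Dp d (α - Pi.single i 1) p) := Dp_succ_left d hcomm _ i p
        _ = 0 := by rw [ih _ hβ, map_zero]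
  intro α hα
  exact key (degS α - (M+1)) α (by omega)

include hcomm in
lemma Fm_mono {M M' : ℕ} (h : M ≤ M') : Fm d M ≤ Fm d M' := by
  intro p hp α hα
  exact Fm_big d hcomm M p hp α (by omega)

include hcomm in
lemma d_mem_Fm {M : ℕ} {p : MP n K} (hp : p ∈ Fm d (M + 1)) (i : Fin n) :
    d i p ∈ Fm d M := by
  intro α hα
  rw [← Dp_succ_right d hcomm]
  exact hp _ (by rw [degS_add, degS_single]; omega)

include hcomm in
lemma mem_Fm_zero {p : MP n K} (h : ∀ i, d i p = 0) : p ∈ Fm d 0 := by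
  intro α hα
  obtain ⟨i, hi⟩ := exists_pos_of_degS α (by omega)
  obtain ⟨h1, _⟩ := sub_single_add α i hi
  rw [← h1, Dp_succ_right d hcomm, h i, map_zero]

include hcomm in
lemma Fm_zero_d {p : MP n K} (hp : p ∈ Fm d 0) (i : Fin n) : d i p = 0 := by
  have := hp (Pi.single i 1) (by rw [degS_single])
  rwa [Dp_apply_pow d hcomm, Function.iterate_one] at this

include hcomm in
/-- multi-index Leibniz, qualitative form -/
lemma Dp_mul_mem_span (α : Fin n → ℕ) (p q : MP n K) :
    Dp d α (p * q) ∈ Submodule.span K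
      {x : MP n K | ∃ β γ, β + γ = α ∧ x = Dp d β p * Dp d γ q} := by
  have key : ∀ (k : ℕ) (α : Fin n → ℕ), degS α = k → Dp d α (p * q) ∈ Submodule.span K
      {x : MP n K | ∃ β γ, β + γ = α ∧ x = Dp d β p * Dp d γ q} := by
    intro k
    induction k with
    | zero =>
      intro α hα
      have : α = 0 := by
        ext j
        have : α j ≤ degS α := Finset.single_le_sum (fun i _ => Nat.zero_le _) (Finset.mem_univ j)
        simp only [Pi.zero_apply]
        omega
      subst this
      apply Submodule.subset_span
      exact ⟨0, 0, by simp, by simp [Dp_zero]⟩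
    | succ k ih =>
      intro α hα
      obtain ⟨i, hi⟩ := exists_pos_of_degS α (by omega)
      obtain ⟨h1, h2⟩ := sub_single_add α i hi
      set β := α - Pi.single i 1 with hβdef
      have hβ : degS β = k := by omega
      have e1 : Dp d α (p * q) = (d i).toLinearMap (Dp d β (p * q)) := by
        rw [← h1, Dp_succ_left d hcomm]; rfl
      rw [e1]
      have := Submodule.mem_map_of_mem (f := (d i).toLinearMap) (ih β hβ)
      rw [Submodule.map_span] at this
      refine Submodule.span_le.mpr ?_ this
      rintro x ⟨y, ⟨β', γ', hsum, rfl⟩, rfl⟩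
      have leib : (d i).toLinearMap (Dp d β' p * Dp d γ' q)
          = Dp d β' p * Dp d (γ' + Pi.single i 1) q + Dp d γ' q * Dp d (β' + Pi.single i 1) p := by
        show d i (Dp d β' p * Dp d γ' q) = _
        rw [Derivation.leibniz, smul_eq_mul, smul_eq_mul,
          Dp_succ_left d hcomm γ' i q, Dp_succ_left d hcomm β' i p]
      rw [leib]
      apply Submodule.add_mem
      · apply Submodule.subset_span
        exact ⟨β', γ' + Pi.single i 1, by rw [← add_assoc, hsum, h1], rfl⟩
      · apply Submodule.subset_span
        refine ⟨β' + Pi.single i 1, γ', by rw [add_right_comm, hsum, h1], ?_⟩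
        ring
  exact key (degS α) α rfl

include hcomm in
lemma Fm_mul {a b : ℕ} {p q : MP n K} (hp : p ∈ Fm d a) (hq : q ∈ Fm d b) :
    p * q ∈ Fm d (a + b) := by
  intro α hα
  have h := Dp_mul_mem_span d hcomm α p q
  have hzero : {x : MP n K | ∃ β γ, β + γ = α ∧ x = Dp d β p * Dp d γ q} ⊆ {0} := by
    rintro x ⟨β, γ, hsum, rfl⟩
    have : degS β + degS γ = a + b + 1 := by rw [← degS_add, hsum, hα]
    have hcase : a < degS β ∨ b < degS γ := by omega
    rcases hcase with hc | hc
    · rw [Fm_big d hcomm a p hp β hc, zero_mul]; rfl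
    · rw [Fm_big d hcomm b q hq γ hc, mul_zero]; rfl
  have hsub : {x : MP n K | ∃ β γ, β + γ = α ∧ x = Dp d β p * Dp d γ q} ⊆
      (⊥ : Submodule K (MP n K)) := by
    intro x hx
    rw [SetLike.mem_coe, Submodule.mem_bot]
    exact hzero hx
  exact (Submodule.mem_bot K).mp (Submodule.span_le.mpr hsub h)

include hcomm hln in
lemma exists_Fm (p : MP n K) : ∃ M, p ∈ Fm d M := by
  have hch : ∀ i : Fin n, ∃ m, (⇑(d i))^[m] p = 0 := fun i => hln i p
  choose m hm using hch
  refine ⟨∑ i, m i, fun α hα => ?_⟩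
  have : ∃ i, m i < α i := by
    by_contra hc
    push_neg at hc
    have : degS α ≤ ∑ i, m i := Finset.sum_le_sum fun i _ => hc i
    omega
  obtain ⟨i, hi⟩ := this
  apply Dp_eq_zero_of_iterate d hcomm α i
  have : α i = (α i - m i) + m i := by omega
  rw [this, Function.iterate_add_apply, hm i]
  exact Function.iterate_fixed (map_zero _) _

include hcomm hker in
lemma key_inj (T : Finset (Fin n))
    (hT : ∀ p : MP n K, (∀ j ∈ T, d j p = 0) → ∀ j, d j p = 0) :
    ∀ (M : ℕ) (p : MP n K), p ∈ Fm d M →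
      (∀ α : Fin n → ℕ, (∀ i, i ∉ T → α i = 0) → degS α ≤ M →
        constantCoeff (Dp d α p) = 0) → p = 0 := by
  intro M
  induction M with
  | zero =>
    intro p hp h
    obtain ⟨c, rfl⟩ := (hker p).mp (Fm_zero_d d hcomm hp)
    have := h 0 (fun _ _ => rfl) (by simp [degS_zero])
    rw [Dp_zero] at this
    simp only [Module.End.one_apply, constantCoeff_C] at this
    rw [this, map_zero]
  | succ M ih =>
    intro p hp h
    have hdj : ∀ j ∈ T, d j p = 0 := by
      intro j hj
      refine ih (d j p) (d_mem_Fm d hcomm hp j) ?_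
      intro α hsupp hdeg
      rw [← Dp_succ_right d hcomm]
      refine h (α + Pi.single j 1) ?_ ?_
      · intro i hi
        have hij : i ≠ j := fun e => hi (e ▸ hj)
        simp [hsupp i hi, Pi.single_apply, hij]
      · rw [degS_add, degS_single]; omega
    obtain ⟨c, rfl⟩ := (hker (p := p)).mp (hT p hdj)
    have := h 0 (fun _ _ => rfl) (by simp [degS_zero])
    rw [Dp_zero] at this
    simp only [Module.End.one_apply, constantCoeff_C] at this
    rw [this, map_zero]

include hcomm hln in
lemma trick (i₀ : Fin n) (lam : Fin n → K) (hlam0 : lam i₀ ≠ 0)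
    (hE : ∀ q ∈ Fm d 1, ∑ j, lam j • d j q = 0) :
    ∀ p : MP n K, (∀ j, j ≠ i₀ → d j p = 0) → d i₀ p = 0 := by
  have key : ∀ (m : ℕ) (p : MP n K), (∀ j, j ≠ i₀ → d j p = 0) →
      (⇑(d i₀))^[m] p = 0 → d i₀ p = 0 := by
    intro m
    induction m with
    | zero =>
      intro p _ h0
      simp only [Function.iterate_zero, id_eq] at h0
      rw [h0, map_zero]
    | succ m ih =>
      intro p hj hit
      by_cases hm : m = 0
      · subst hm
        simpa using hit
      -- first : d i₀ (d i₀ p) = 0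
      have hdd : d i₀ (d i₀ p) = 0 := by
        refine ih (d i₀ p) (fun j hji => ?_) ?_
        · rw [← d_comm d hcomm, hj j hji, map_zero]
        · rw [← Function.iterate_succ_apply]
          exact hit
      -- p ∈ Fm 1
      have hp1 : p ∈ Fm d 1 := by
        intro α hα
        by_cases hsupp : ∀ j, j ≠ i₀ → α j = 0
        · have hαi : α = Pi.single i₀ 2 := by
            ext j
            by_cases hji : j = i₀
            · subst hji
              have : degS α = α j := by
                rw [degS]
                rw [Finset.sum_eq_single j]
                · intro b _ hb; exact hsupp b hb
                · intro hb; exact absurd (Finset.mem_univ j) hb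
              simp [Pi.single_apply]
              omega
            · simp [hsupp j hji, Pi.single_apply, hji]
          rw [hαi, Dp_apply_pow d hcomm]
          have : (⇑(d i₀))^[2] p = d i₀ (d i₀ p) := by
            simp [Function.iterate_succ_apply']
          rw [this]
          exact hdd
        · push_neg at hsupp
          obtain ⟨j, hji, hαj⟩ := hsupp
          obtain ⟨h1, _⟩ := sub_single_add α j (by omega)
          rw [← h1, Dp_succ_right d hcomm, hj j hji, map_zero]
      have := hE p hp1
      rw [Finset.sum_eq_single i₀] at this
      · have : lam i₀ • d i₀ p = 0 := this
        exact (smul_eq_zero.mp this).resolve_left hlam0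
      · intro b _ hb
        rw [hj b hb, smul_zero]
      · intro hb; exact absurd (Finset.mem_univ i₀) hb
  intro p hj
  obtain ⟨m, hm⟩ := hln i₀ p
  exact key m p hj hm

end Filtration

section Counting

variable (n K)

/-- multi-indices of weight at most `m` -/
def Bset (m : ℕ) : Finset (Fin n → ℕ) :=
  (Fintype.piFinset fun _ => Finset.range (m+1)).filter (fun α => degS α ≤ m)

/-- multi-indices of weight at most `m` supported in `T` -/
def Sset (T : Finset (Fin n)) (m : ℕ) : Finset (Fin n → ℕ) :=
  (Bset n m).filter (fun α => ∀ i, i ∉ T → α i = 0)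

variable {n K}

lemma mem_Bset {m : ℕ} {α : Fin n → ℕ} : α ∈ Bset n m ↔ degS α ≤ m := by
  constructor
  · intro h
    exact (Finset.mem_filter.mp h).2
  · intro h
    refine Finset.mem_filter.mpr ⟨Fintype.mem_piFinset.mpr fun i => ?_, h⟩
    rw [Finset.mem_range]
    have : α i ≤ degS α := Finset.single_le_sum (fun i _ => Nat.zero_le _) (Finset.mem_univ i)
    omega

lemma mem_Sset {T : Finset (Fin n)} {m : ℕ} {α : Fin n → ℕ} :
    α ∈ Sset n T m ↔ degS α ≤ m ∧ ∀ i, i ∉ T → α i = 0 := by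
  rw [Sset, Finset.mem_filter, mem_Bset]

lemma card_Sset_le (T : Finset (Fin n)) (m : ℕ) :
    (Sset n T m).card ≤ (m+1) ^ T.card := by
  classical
  set t : Finset ({x // x ∈ T} → ℕ) := Fintype.piFinset fun _ : {x // x ∈ T} => Finset.range (m+1)
    with ht
  have hmaps : ∀ α ∈ Sset n T m, (fun i : {x // x ∈ T} => α i.val) ∈ t := by
    intro α hα
    refine Fintype.mem_piFinset.mpr fun i => ?_
    rw [Finset.mem_range]
    rcases mem_Sset.mp hα with ⟨h1, _⟩
    have : α i.val ≤ degS α := Finset.single_le_sum (fun i _ => Nat.zero_le _) (Finset.mem_univ _)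
    omega
  have hinj : ∀ α ∈ Sset n T m, ∀ β ∈ Sset n T m,
      (fun i : {x // x ∈ T} => α i.val) = (fun i : {x // x ∈ T} => β i.val) → α = β := by
    intro α hα β hβ hfg
    funext i
    by_cases hi : i ∈ T
    · exact congrFun hfg ⟨i, hi⟩
    · rw [(mem_Sset.mp hα).2 i hi, (mem_Sset.mp hβ).2 i hi]
  have hcard := Finset.card_le_card_of_injOn _ hmaps hinj
  calc (Sset n T m).card ≤ t.card := hcard
    _ = (m+1) ^ T.card := by
      rw [ht, Fintype.card_piFinset]
      simp [Finset.card_range, Finset.prod_const, Fintype.card_coe]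

lemma le_card_Bset (q : ℕ) : (q+1) ^ n ≤ (Bset n (n*q)).card := by
  classical
  have := Finset.card_le_card_of_injOn
    (f := fun (γ : Fin n → Fin (q+1)) => fun i => (γ i : ℕ))
    (s := (Finset.univ : Finset (Fin n → Fin (q+1))))
    (t := Bset n (n*q))
    (fun γ _ => mem_Bset.mpr (by
      calc degS (fun i => (γ i : ℕ)) ≤ ∑ _i : Fin n, q :=
            Finset.sum_le_sum (fun i _ => Nat.lt_succ_iff.mp (γ i).isLt)
        _ = n * q := by simp [Finset.sum_const, mul_comm]))
    (fun γ _ γ' _ h => by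
      funext i
      exact Fin.ext (congrFun h i))
  calc (q+1)^n = (Finset.univ : Finset (Fin n → Fin (q+1))).card := by
        simp [Finset.card_univ]
    _ ≤ _ := this

/-- the constant coefficient as a linear map -/
noncomputable def ccLin : MP n K →ₗ[K] K where
  toFun := constantCoeff
  map_add' := map_add _
  map_smul' := fun c p => by
    simp [smul_eq_C_mul, RingHom.id_apply, smul_eq_mul]

@[simp] lemma ccLin_apply (p : MP n K) : ccLin p = constantCoeff p := rfl

/-- monomial associated to a multi-index -/
noncomputable def mono (α : Fin n → ℕ) : MP n K :=
  monomial (Finsupp.equivFunOnFinite.symm α) 1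

lemma mono_eq_prod (α : Fin n → ℕ) : (mono α : MP n K) = ∏ i, X i ^ α i := by
  rw [mono, monomial_eq, C_1, one_mul, Finsupp.prod]
  apply Finset.prod_subset (Finset.subset_univ _)
  intro i _ hi
  rw [Finsupp.notMem_support_iff] at hi
  rw [show (Finsupp.equivFunOnFinite.symm α) i = α i from rfl] at hi ⊢
  rw [hi, pow_zero]

lemma mono_linearIndependent (A : Finset (Fin n → ℕ)) :
    LinearIndependent K (fun α : {x // x ∈ A} => (mono (α : Fin n → ℕ) : MP n K)) := by
  have hb := (basisMonomials (Fin n) K).linearIndependent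
  have := hb.comp (fun α : {x // x ∈ A} => Finsupp.equivFunOnFinite.symm (α : Fin n → ℕ))
    (fun a b hab => by
      apply Subtype.ext
      have := Finsupp.equivFunOnFinite.symm.injective hab
      exact this)
  simpa [Function.comp_def, mono, coe_basisMonomials] using this

end Counting

section FmFacts

variable (hln : ∀ (i : Fin n) (p : MP n K), ∃ m : ℕ, (⇑(d i))^[m] p = 0)
variable (hker : ∀ p : MP n K, (∀ i : Fin n, d i p = 0) ↔ ∃ c : K, p = C c)

include hcomm in
lemma one_mem_Fm : (1 : MP n K) ∈ Fm d 0 :=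
  mem_Fm_zero d hcomm fun i => (d i).map_one_eq_zero

include hcomm in
lemma C_mem_Fm (c : K) : (C c : MP n K) ∈ Fm d 0 := by
  apply mem_Fm_zero d hcomm
  intro i
  have : (C c : MP n K) = algebraMap K (MP n K) c := rfl
  rw [this, Derivation.map_algebraMap]

include hcomm in
lemma Fm_pow {a : ℕ} {p : MP n K} (hp : p ∈ Fm d a) (k : ℕ) : p ^ k ∈ Fm d (a * k) := by
  induction k with
  | zero => simpa using one_mem_Fm d hcomm
  | succ k ih =>
    have := Fm_mul d hcomm ih hp
    rw [pow_succ, Nat.mul_succ]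
    exact this

include hcomm in
lemma mono_mem_Fm {N m : ℕ} (hX : ∀ i : Fin n, (X i : MP n K) ∈ Fm d N)
    {α : Fin n → ℕ} (hα : degS α ≤ m) : (mono α : MP n K) ∈ Fm d (N * m) := by
  rw [mono_eq_prod]
  have hprod : (∏ i, (X i : MP n K) ^ α i) ∈ Fm d (∑ i, N * α i) := by
    classical
    induction (Finset.univ : Finset (Fin n)) using Finset.cons_induction with
    | empty => simpa using one_mem_Fm d hcomm
    | cons j s hj ih =>
      rw [Finset.prod_cons, Finset.sum_cons]
      exact Fm_mul d hcomm (Fm_pow d hcomm (hX j) (α j)) ih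
  refine Fm_mono d hcomm ?_ hprod
  calc ∑ i, N * α i = N * degS α := by rw [degS, Finset.mul_sum]
    _ ≤ N * m := Nat.mul_le_mul_left N hα

include hcomm hker in
lemma Fm_findim_card (T : Finset (Fin n))
    (hT : ∀ p : MP n K, (∀ j ∈ T, d j p = 0) → ∀ j, d j p = 0) (M : ℕ) :
    FiniteDimensional K (Fm d M) ∧
      Module.finrank K (Fm d M) ≤ (Sset n T M).card := by
  classical
  set theta : (Fm d M) →ₗ[K] ({x // x ∈ Sset n T M} → K) :=
    LinearMap.pi fun α => ccLin ∘ₗ (Dp d (α : Fin n → ℕ)) ∘ₗ (Fm d M).subtype with htheta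
  have hinj : Function.Injective theta := by
    rw [← LinearMap.ker_eq_bot, LinearMap.ker_eq_bot']
    intro p hp
    apply Subtype.ext
    refine key_inj d hcomm hker T hT M p.val p.2 ?_
    intro α hsupp hdeg
    have := congrFun hp ⟨α, mem_Sset.mpr ⟨hdeg, hsupp⟩⟩
    simpa [htheta] using this
  haveI hfd : FiniteDimensional K (Fm d M) := Module.Finite.of_injective theta hinj
  refine ⟨hfd, ?_⟩
  have := LinearMap.finrank_le_finrank_of_injective hinj
  calc Module.finrank K (Fm d M) ≤ Module.finrank K ({x // x ∈ Sset n T M} → K) := this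
    _ = (Sset n T M).card := by rw [Module.finrank_pi, Fintype.card_coe]

/-- the joint "gradient at the origin" map -/
noncomputable def Phi : MP n K →ₗ[K] (Fin n → K) := LinearMap.pi fun i => ccLin ∘ₗ (d i).toLinearMap

@[simp] lemma Phi_apply (p : MP n K) (i : Fin n) : Phi d p i = constantCoeff (d i p) := rfl

include hcomm hker in
lemma d_of_mem_Fm_one {s : MP n K} (hs : s ∈ Fm d 1) (i : Fin n) :
    d i s = C (Phi d s i) := by
  have h0 : d i s ∈ Fm d 0 := d_mem_Fm d hcomm hs i
  obtain ⟨c, hc⟩ := (hker (d i s)).mp (Fm_zero_d d hcomm h0)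
  rw [hc]
  congr 1
  rw [Phi_apply, hc, constantCoeff_C]

include hcomm hln hker in
lemma slices_exist :
    ∀ j : Fin n, ∃ s : MP n K, s ∈ Fm d 1 ∧
      ∀ i : Fin n, d i s = C (if i = j then (1:K) else 0) := by
  classical
  set U : Submodule K (Fin n → K) := (Fm d 1).map (Phi d) with hU
  have hUtop : U = ⊤ := by
    by_contra hUt
    obtain ⟨v₀, hv₀⟩ : ∃ v₀, v₀ ∉ U := by
      by_contra hc; push_neg at hc; exact hUt (Submodule.eq_top_iff'.mpr hc)
    have hπ : U.mkQ v₀ ≠ 0 := by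
      rw [Submodule.mkQ_apply, ne_eq, Submodule.Quotient.mk_eq_zero]; exact hv₀
    have hex : ¬ ∀ φ : Module.Dual K ((Fin n → K) ⧸ U), φ (U.mkQ v₀) = 0 := by
      intro h
      exact hπ ((Module.forall_dual_apply_eq_zero_iff K (U.mkQ v₀)).mp h)
    push_neg at hex
    obtain ⟨φ, hφ⟩ := hex
    set f : (Fin n → K) →ₗ[K] K := φ ∘ₗ U.mkQ with hf
    have hfU : ∀ v ∈ U, f v = 0 := by
      intro v hv
      have : U.mkQ v = 0 := by rwa [Submodule.mkQ_apply, Submodule.Quotient.mk_eq_zero]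
      rw [hf, LinearMap.comp_apply, this, map_zero]
    set lam : Fin n → K := fun j => f (Pi.single j 1) with hlam
    have hfv : ∀ v : Fin n → K, f v = ∑ j, v j * lam j := by
      intro v
      have hv : v = ∑ j, v j • (Pi.single j 1 : Fin n → K) := by
        funext i
        rw [Finset.sum_apply]
        simp [Pi.single_apply]
      calc f v = f (∑ j, v j • (Pi.single j 1 : Fin n → K)) := by rw [← hv]
        _ = ∑ j, v j * lam j := by
            rw [map_sum]
            exact Finset.sum_congr rfl fun j _ => by rw [map_smul, smul_eq_mul, hlam]
    have hlam0 : ∃ i₀, lam i₀ ≠ 0 := by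
      by_contra hc
      push_neg at hc
      have : f v₀ = 0 := by rw [hfv]; exact Finset.sum_eq_zero fun j _ => by rw [hc j, mul_zero]
      exact hφ this
    obtain ⟨i₀, hi₀⟩ := hlam0
    have hE : ∀ q ∈ Fm d 1, ∑ j, lam j • d j q = 0 := by
      intro q hq
      have hdq : ∀ j, d j q = C (Phi d q j) := fun j => d_of_mem_Fm_one d hcomm hker hq j
      have : ∑ j, lam j • d j q = C (f (Phi d q)) := by
        rw [hfv]
        rw [map_sum]
        refine Finset.sum_congr rfl fun j _ => ?_
        rw [hdq j, smul_eq_C_mul, ← C_mul, mul_comm]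
      rw [this, hfU _ (Submodule.mem_map_of_mem hq), map_zero]
    set T : Finset (Fin n) := Finset.univ.erase i₀ with hTdef
    have hT : ∀ p : MP n K, (∀ j ∈ T, d j p = 0) → ∀ j, d j p = 0 := by
      intro p hp j
      by_cases hj : j = i₀
      · rw [hj]
        exact trick d hcomm hln i₀ lam hi₀ hE p
          (fun j' hj' => hp j' (Finset.mem_erase.mpr ⟨hj', Finset.mem_univ _⟩))
      · exact hp j (Finset.mem_erase.mpr ⟨hj, Finset.mem_univ _⟩)
    choose Mx hMx using fun i => exists_Fm d hcomm hln (X i : MP n K)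
    set N := Finset.univ.sup Mx with hN
    have hXN : ∀ i, (X i : MP n K) ∈ Fm d N :=
      fun i => Fm_mono d hcomm (Finset.le_sup (Finset.mem_univ i)) (hMx i)
    set q₀ := (N*n+1)^n with hq₀
    set d₀ := n * q₀ with hd₀
    set M := N * d₀ with hM
    have hmem : ∀ β ∈ Bset n d₀, (mono β : MP n K) ∈ Fm d M :=
      fun β hβ => mono_mem_Fm d hcomm hXN (mem_Bset.mp hβ)
    have hindep0 := mono_linearIndependent (K := K) (Bset n d₀)
    set v : {x // x ∈ Bset n d₀} → Fm d M := fun β => ⟨mono ↑β, hmem _ β.2⟩ with hv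
    have hindep : LinearIndependent K v := by
      apply LinearIndependent.of_comp (Fm d M).subtype
      exact hindep0
    obtain ⟨hfd, hrank⟩ := Fm_findim_card d hcomm hker T hT M
    have h1 : Fintype.card {x // x ∈ Bset n d₀} ≤ Module.finrank K (Fm d M) :=
      hindep.fintype_card_le_finrank
    have hchain : (q₀+1)^n ≤ (M+1)^(n-1) := by
      calc (q₀+1)^n ≤ (Bset n d₀).card := le_card_Bset q₀
        _ = Fintype.card {x // x ∈ Bset n d₀} := (Fintype.card_coe _).symm
        _ ≤ Module.finrank K (Fm d M) := h1
        _ ≤ (Sset n T M).card := hrank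
        _ ≤ (M+1)^T.card := card_Sset_le T M
        _ = (M+1)^(n-1) := by
            rw [hTdef, Finset.card_erase_of_mem (Finset.mem_univ i₀), Finset.card_univ,
              Fintype.card_fin]
    have hn1 : 1 ≤ n := i₀.pos
    have harith : (M+1)^(n-1) < (q₀+1)^n := by
      have e1 : M + 1 ≤ (N*n+1)*(q₀+1) := by
        have hMe : M = N*n*q₀ := by rw [hM, hd₀]; ring
        rw [hMe]
        nlinarith [Nat.zero_le (N*n), Nat.zero_le q₀]
      have e2 : (M+1)^(n-1) ≤ ((N*n+1)*(q₀+1))^(n-1) := Nat.pow_le_pow_left e1 _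
      have e3 : ((N*n+1)*(q₀+1))^(n-1) = (N*n+1)^(n-1) * (q₀+1)^(n-1) := mul_pow _ _ _
      have e4 : (N*n+1)^(n-1) ≤ q₀ := by
        rw [hq₀]
        exact Nat.pow_le_pow_right (Nat.le_add_left 1 _) (by omega)
      have e5 : (q₀+1)^n = (q₀+1)^(n-1) * (q₀+1) := by
        rw [← pow_succ]
        congr 1
        omega
      calc (M+1)^(n-1) ≤ (N*n+1)^(n-1) * (q₀+1)^(n-1) := by rw [← e3]; exact e2
        _ ≤ q₀ * (q₀+1)^(n-1) := Nat.mul_le_mul_right _ e4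
        _ < (q₀+1) * (q₀+1)^(n-1) := by
            have : 0 < (q₀+1)^(n-1) := Nat.pow_pos (by omega)
            exact Nat.mul_lt_mul_of_lt_of_le (Nat.lt_succ_self _) (le_refl _) this
        _ = (q₀+1)^n := by rw [e5, mul_comm]
    omega
  intro j
  have hmem : Pi.single j (1:K) ∈ U := by rw [hUtop]; trivial
  obtain ⟨s, hs1, hs2⟩ := hmem
  refine ⟨s, hs1, fun i => ?_⟩
  rw [d_of_mem_Fm_one d hcomm hker hs1 i]
  congr 1
  have h3 := congrFun hs2 i
  exact h3.trans (by rw [Pi.single_apply])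

end FmFacts

section PDeriv

lemma finsupp_add_sub (β : Fin n →₀ ℕ) (i : Fin n) :
    β + Finsupp.single i 1 - Finsupp.single i 1 = β :=
  add_tsub_cancel_right β (Finsupp.single i 1)

lemma finsupp_sub_add (β : Fin n →₀ ℕ) (i : Fin n) (h : β i ≠ 0) :
    β - Finsupp.single i 1 + Finsupp.single i 1 = β :=
  tsub_add_cancel_of_le (Finsupp.single_le_iff.mpr (by omega))

lemma coeff_pderiv' (i : Fin n) (p : MP n K) (β : Fin n →₀ ℕ) :
    coeff β (pderiv i p) = ((β i : K) + 1) * coeff (β + Finsupp.single i 1) p := by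
  classical
  induction p using MvPolynomial.induction_on' with
  | add p q hp hq => simp [hp, hq, mul_add]
  | monomial s a =>
    rw [pderiv_monomial, coeff_monomial, coeff_monomial]
    by_cases h : s = β + Finsupp.single i 1
    · subst h
      rw [if_pos (finsupp_add_sub β i), if_pos rfl]
      have h5 : ((β + Finsupp.single i 1 : Fin n →₀ ℕ)) i = β i + 1 := by
        rw [Finsupp.add_apply, Finsupp.single_eq_same]
      rw [h5]
      push_cast
      ring
    · rw [if_neg h, mul_zero]
      by_cases h2 : s - Finsupp.single i 1 = β
      · rw [if_pos h2]
        by_cases h3 : s i = 0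
        · rw [h3]
          simp
        · exfalso
          apply h
          rw [← h2, finsupp_sub_add s i h3]
      · rw [if_neg h2]

lemma eq_C_of_support_zero {p : MP n K} (h : ∀ m ∈ p.support, m = 0) :
    p = C (coeff 0 p) := by
  ext m
  by_cases hm : m = 0
  · subst hm; simp
  · rw [coeff_C, if_neg (fun e => hm e.symm)]
    by_contra hc
    exact hm (h m (by rwa [MvPolynomial.mem_support_iff]))

lemma coeff_eq_zero_of_pderiv_zero {p : MP n K} {i : Fin n} (h : pderiv i p = 0)
    {m : Fin n →₀ ℕ} (hi : m i ≠ 0) : coeff m p = 0 := by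
  have hco := coeff_pderiv' i p (m - Finsupp.single i 1)
  rw [h, finsupp_sub_add m i hi] at hco
  simp only [coeff_zero] at hco
  rcases mul_eq_zero.mp hco.symm with h' | h'
  · exfalso
    set γ : Fin n →₀ ℕ := m - Finsupp.single i 1 with hγ
    have h'' : ((γ i + 1 : ℕ) : K) = 0 := by push_cast; exact h'
    have : (γ i + 1 : ℕ) = 0 := by exact_mod_cast h''
    omega
  · exact h'

lemma pderiv_all_zero_imp_C {p : MP n K} (h : ∀ i, pderiv i p = 0) :
    ∃ c : K, p = C c := by
  refine ⟨coeff 0 p, eq_C_of_support_zero ?_⟩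
  intro m hm
  by_contra hm0
  have : ∃ i, m i ≠ 0 := by
    by_contra hc
    push_neg at hc
    exact hm0 (Finsupp.ext hc)
  obtain ⟨i, hi⟩ := this
  exact (MvPolynomial.mem_support_iff.mp hm) (coeff_eq_zero_of_pderiv_zero (h i) hi)

lemma support_pderiv_degree {p : MP n K} {i : Fin n} {β : Fin n →₀ ℕ}
    (hβ : β ∈ (pderiv i p).support) :
    (β.sum fun _ v => v) + 1 ≤ p.totalDegree := by
  have hco := coeff_pderiv' i p β
  have hβne : coeff β (pderiv i p) ≠ 0 := MvPolynomial.mem_support_iff.mp hβ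
  have hcoeff : coeff (β + Finsupp.single i 1) p ≠ 0 := by
    intro h
    rw [hco, h, mul_zero] at hβne
    exact hβne rfl
  have hmem : β + Finsupp.single i 1 ∈ p.support := MvPolynomial.mem_support_iff.mpr hcoeff
  have hle := le_totalDegree hmem
  calc (β.sum fun _ v => v) + 1 = ((β + Finsupp.single i 1).sum fun _ v => v) := by
        rw [Finsupp.sum_add_index (fun _ _ => rfl) (fun _ _ _ _ => rfl)]
        rw [Finsupp.sum_single_index rfl]
    _ ≤ p.totalDegree := hle

lemma totalDegree_pderiv_le {p : MP n K} {i : Fin n} {k : ℕ}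
    (h : p.totalDegree ≤ k + 1) : (pderiv i p).totalDegree ≤ k := by
  rw [totalDegree]
  apply Finset.sup_le
  intro β hβ
  have := support_pderiv_degree hβ
  omega

end PDeriv

section Final

include hcomm in
lemma mem_Fm_succ_of {M : ℕ} {p : MP n K} (h : ∀ i, d i p ∈ Fm d M) : p ∈ Fm d (M+1) := by
  intro α hα
  obtain ⟨i, hi⟩ := exists_pos_of_degS α (by omega)
  obtain ⟨h1, h2⟩ := sub_single_add α i hi
  rw [← h1, Dp_succ_right d hcomm]
  exact h i _ (by omega)

include hcomm in
lemma prodpow_mem {g : Fin n → MP n K} (hg : ∀ i, g i ∈ Fm d 1) {α : Fin n → ℕ} {m : ℕ}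
    (hα : degS α ≤ m) : (∏ i, g i ^ α i) ∈ Fm d m := by
  classical
  have hprod : (∏ i, g i ^ α i) ∈ Fm d (∑ i, 1 * α i) := by
    induction (Finset.univ : Finset (Fin n)) using Finset.cons_induction with
    | empty => simpa using one_mem_Fm d hcomm
    | cons j t hj ih =>
      rw [Finset.prod_cons, Finset.sum_cons]
      exact Fm_mul d hcomm (Fm_pow d hcomm (hg j) (α j)) ih
  refine Fm_mono d hcomm ?_ hprod
  calc ∑ i, 1 * α i = degS α := by simp [degS]
    _ ≤ m := hα

end Final

end CLND

open CLND in
/-- If ∂_1',...,∂_n' are pairwise commuting locally nilpotent derivations of P_n with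
∩ ker(∂_i') = K, then there are polynomials x_i' with ∂_i'(x_j') = δ_{ij}, the algebra
endomorphism x_i ↦ x_i' is an automorphism σ, and ∂_i' = σ ∂_i σ⁻¹. -/
theorem commuting_locally_nilpotent_derivations_conjugate_to_partials
    (n : ℕ) (K : Type*) [Field K] [CharZero K]
    (d : Fin n → Derivation K (MvPolynomial (Fin n) K) (MvPolynomial (Fin n) K))
    (hcomm : ∀ i j : Fin n, ⁅d i, d j⁆ = 0)
    (hln : ∀ (i : Fin n) (p : MvPolynomial (Fin n) K), ∃ m : ℕ, (⇑(d i))^[m] p = 0)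
    (hker : ∀ p : MvPolynomial (Fin n) K, (∀ i : Fin n, d i p = 0) ↔ ∃ c : K, p = C c) :
    ∃ x' : Fin n → MvPolynomial (Fin n) K,
      (∀ i j : Fin n, d i (x' j) = if i = j then 1 else 0) ∧
      ∃ σ : MvPolynomial (Fin n) K ≃ₐ[K] MvPolynomial (Fin n) K,
        (∀ i : Fin n, σ (X i) = x' i) ∧
        (∀ (i : Fin n) (p : MvPolynomial (Fin n) K), d i p = σ (pderiv i (σ.symm p))) := by
  classical
  choose s hs1 hs2 using slices_exist d hcomm hln hker
  set σ : MvPolynomial (Fin n) K →ₐ[K] MvPolynomial (Fin n) K := aeval s with hσ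
  have hσX : ∀ i, σ (X i) = s i := fun i => aeval_X s i
  have hds : ∀ i j, d i (s j) = if i = j then 1 else 0 := by
    intro i j
    rw [hs2 j i]
    split
    · exact C_1
    · exact C_0
  have hσC : ∀ c : K, σ (C c) = C c := fun c => by
    rw [hσ]
    simp [algHom_C]
  have hdC : ∀ (i : Fin n) (c : K), d i (C c : MvPolynomial (Fin n) K) = 0 := by
    intro i c
    have : (C c : MvPolynomial (Fin n) K) = algebraMap K _ c := rfl
    rw [this, Derivation.map_algebraMap]
  have hconj : ∀ (p : MvPolynomial (Fin n) K) (i : Fin n), d i (σ p) = σ (pderiv i p) := by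
    intro p i
    induction p using MvPolynomial.induction_on with
    | C a => rw [hσC, hdC, pderiv_C, map_zero]
    | add p q hp hq => rw [map_add, map_add, map_add, hp, hq, map_add]
    | mul_X p j hp =>
      rw [map_mul, Derivation.leibniz, smul_eq_mul, smul_eq_mul, hσX, hds, hp,
        pderiv_mul, map_add, map_mul, map_mul, hσX]
      have : pderiv i (X j : MvPolynomial (Fin n) K) = if i = j then 1 else 0 := by
        rw [pderiv_X, Pi.single_apply]
        simp [eq_comm]
      rw [this]
      split <;> simp <;> ring
  have hCzero : ∀ c : K, σ (C c) = 0 → (C c : MvPolynomial (Fin n) K) = 0 := by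
    intro c h0
    rw [hσC] at h0
    exact h0
  have hinj : Function.Injective σ := by
    suffices h : ∀ (k : ℕ) (p : MvPolynomial (Fin n) K), totalDegree p ≤ k → σ p = 0 → p = 0 by
      intro a b hab
      have h1 : σ (a - b) = 0 := by rw [map_sub, hab, sub_self]
      exact sub_eq_zero.mp (h (totalDegree (a-b)) _ le_rfl h1)
    intro k
    induction k with
    | zero =>
      intro p hdeg h0
      have hsupp : ∀ m ∈ p.support, m = 0 := by
        intro m hm
        have := (totalDegree_eq_zero_iff (Fin n) p).mp (Nat.le_zero.mp hdeg) m hm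
        exact Finsupp.ext this
      have hp : p = C (coeff 0 p) := eq_C_of_support_zero hsupp
      rw [hp] at h0 ⊢
      exact hCzero _ h0
    | succ k ih =>
      intro p hdeg h0
      have hder : ∀ i, pderiv i p = 0 := by
        intro i
        apply ih _ (totalDegree_pderiv_le hdeg)
        rw [← hconj p i, h0, map_zero]
      obtain ⟨c, rfl⟩ := pderiv_all_zero_imp_C hder
      exact hCzero _ h0
  have hsur : Function.Surjective σ := by
    intro p
    obtain ⟨M, hM⟩ := exists_Fm d hcomm hln p
    have hT : ∀ q : MvPolynomial (Fin n) K, (∀ j ∈ Finset.univ, d j q = 0) → ∀ j, d j q = 0 :=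
      fun q h j => h j (Finset.mem_univ j)
    obtain ⟨hfd, hrank⟩ := Fm_findim_card d hcomm hker Finset.univ hT M
    have hSB : Sset n Finset.univ M = Bset n M := by
      apply Finset.ext
      intro α
      rw [mem_Sset, mem_Bset]
      simp
    have hmem : ∀ β ∈ Bset n M, σ (mono β) ∈ Fm d M := by
      intro β hβ
      rw [mono_eq_prod, map_prod]
      simp only [map_pow, hσX]
      exact prodpow_mem d hcomm hs1 (mem_Bset.mp hβ)
    have hindep : LinearIndependent K (fun β : {x // x ∈ Bset n M} => σ (mono (β : Fin n → ℕ))) := by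
      have := (mono_linearIndependent (K := K) (Bset n M)).map' σ.toLinearMap
        (LinearMap.ker_eq_bot.mpr hinj)
      exact this
    set W : Submodule K (MvPolynomial (Fin n) K) :=
      Submodule.span K (Set.range fun β : {x // x ∈ Bset n M} => σ (mono (β : Fin n → ℕ))) with hW
    have hWle : W ≤ Fm d M := by
      rw [hW, Submodule.span_le]
      rintro x ⟨β, rfl⟩
      exact hmem _ β.2
    have hrankW : Module.finrank K W = Fintype.card {x // x ∈ Bset n M} :=
      finrank_span_eq_card hindep
    have hle2 : Module.finrank K (Fm d M) ≤ Module.finrank K W := by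
      rw [hrankW, Fintype.card_coe]
      calc Module.finrank K (Fm d M) ≤ (Sset n Finset.univ M).card := hrank
        _ = (Bset n M).card := by rw [hSB]
    have hWeq : W = Fm d M := Submodule.eq_of_le_of_finrank_le hWle hle2
    have hpW : p ∈ W := by rw [hWeq]; exact hM
    have hWrange : W ≤ LinearMap.range σ.toLinearMap := by
      rw [hW, Submodule.span_le]
      rintro x ⟨β, rfl⟩
      exact ⟨mono (β : Fin n → ℕ), rfl⟩
    obtain ⟨q, hq⟩ := hWrange hpW
    exact ⟨q, hq⟩
  refine ⟨s, hds, AlgEquiv.ofBijective σ ⟨hinj, hsur⟩, fun i => hσX i, ?_⟩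
  intro i p
  set e := AlgEquiv.ofBijective σ ⟨hinj, hsur⟩ with he
  calc d i p = d i (e (e.symm p)) := by rw [e.apply_symm_apply]
    _ = d i (σ (e.symm p)) := rfl
    _ = σ (pderiv i (e.symm p)) := hconj _ i
    _ = e (pderiv i (e.symm p)) := rfl
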